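/- Let (X,τ) be a Hausdorff topological space, m a finite Radon measure on X, and p ∈ (1,∞). Let f_n, f : X → [0,∞] be Borel functions with ∫_X f_n^p dm < ∞ for all n, ∫_X f^p dm < ∞, and ∫_X |f_n − f|^p dm → 0 as n → ∞. Then there exist a subsequence (f_{n_k}) and a family Σ of finite Radon measures on X with Mod_p(Σ) = 0 such that lim_{k→∞} ∫_X |f_{n_k} − f| dμ = 0 for every finite Radon measure μ on X not belonging to Σ. -/

import Mathlib

open Filter Set Topology MeasureTheory
open scoped ENNReal

/-- The `p`-modulus (with respect to the reference measure `m`) of a family `S`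
of measures on `X`. -/
noncomputable def Modp {X : Type*} [MeasurableSpace X] (m : Measure X) (p : ℝ)
    (S : Set (Measure X)) : ℝ≥0∞ :=
  ⨅ h ∈ {h : X → ℝ≥0∞ | Measurable h ∧ ∀ μ ∈ S, 1 ≤ ∫⁻ x, h x ∂μ},
    ∫⁻ x, h x ^ p ∂m

/-- The "absolute difference" of two extended nonnegative reals. -/
noncomputable def ediff (a b : ℝ≥0∞) : ℝ≥0∞ := (a - b) + (b - a)

/-- Minkowski inequality for finite sums of `ℝ≥0∞`-valued functions. -/
lemma lp_sum_le {X : Type*} [MeasurableSpace X] (m : Measure X) {p : ℝ} (hp : 1 ≤ p)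
    (u : ℕ → X → ℝ≥0∞) (hu : ∀ i, Measurable (u i)) (n : ℕ) :
    (∫⁻ x, (∑ i ∈ Finset.range n, u i x) ^ p ∂m) ^ (1 / p) ≤
      ∑ i ∈ Finset.range n, (∫⁻ x, u i x ^ p ∂m) ^ (1 / p) := by
  have hp0 : 0 < p := lt_of_lt_of_le one_pos hp
  induction n with
  | zero =>
      simp only [Finset.range_zero, Finset.sum_empty, ENNReal.zero_rpow_of_pos hp0,
        lintegral_zero]
      rw [ENNReal.zero_rpow_of_pos (by positivity)]
  | succ n ih =>
      simp only [Finset.sum_range_succ]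
      have hsm : Measurable fun x => ∑ i ∈ Finset.range n, u i x :=
        Finset.measurable_sum _ fun i _ => hu i
      calc (∫⁻ x, ((∑ i ∈ Finset.range n, u i x) + u n x) ^ p ∂m) ^ (1 / p)
          ≤ (∫⁻ x, (∑ i ∈ Finset.range n, u i x) ^ p ∂m) ^ (1 / p)
            + (∫⁻ x, u n x ^ p ∂m) ^ (1 / p) :=
            ENNReal.lintegral_Lp_add_le hsm.aemeasurable (hu n).aemeasurable hp
        _ ≤ _ := add_le_add ih le_rfl

theorem stmt14 {X : Type*} [TopologicalSpace X] [T2Space X] [MeasurableSpace X] [BorelSpace X]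
    (m : Measure X) [IsFiniteMeasure m] [m.InnerRegular]
    (p : ℝ) (hp : 1 < p)
    (f : ℕ → X → ℝ≥0∞) (flim : X → ℝ≥0∞)
    (hfm : ∀ n, Measurable (f n)) (hflimm : Measurable flim)
    (hfint : ∀ n, ∫⁻ x, f n x ^ p ∂m ≠ ⊤) (hflimint : ∫⁻ x, flim x ^ p ∂m ≠ ⊤)
    (hconv : Tendsto (fun n => ∫⁻ x, ediff (f n x) (flim x) ^ p ∂m) atTop (𝓝 0)) :
    ∃ φ : ℕ → ℕ, StrictMono φ ∧
      ∃ S : Set (Measure X), Modp m p S = 0 ∧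
        ∀ μ : Measure X, IsFiniteMeasure μ → μ.InnerRegular → μ ∉ S →
          Tendsto (fun k => ∫⁻ x, ediff (f (φ k) x) (flim x) ∂μ) atTop (𝓝 0) := by
  have hp0 : (0:ℝ) < p := lt_trans one_pos hp
  have hp0' : p ≠ 0 := hp0.ne'
  -- choose the subsequence
  have hev : ∀ k : ℕ, ∀ᶠ n in atTop,
      ∫⁻ x, ediff (f n x) (flim x) ^ p ∂m ≤ ((4:ℝ≥0∞)⁻¹ ^ (k+1)) ^ p := by
    intro k
    have hpos : (0:ℝ≥0∞) < ((4:ℝ≥0∞)⁻¹ ^ (k+1)) ^ p := by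
      exact ENNReal.rpow_pos (pos_iff_ne_zero.mpr (pow_ne_zero _ (by simp)))
        (ENNReal.pow_ne_top (by simp))
    exact (hconv.eventually_lt_const hpos).mono fun n hn => hn.le
  obtain ⟨φ, hφ, hφ2⟩ := Filter.extraction_forall_of_eventually hev
  refine ⟨φ, hφ, ?_⟩
  set g : ℕ → X → ℝ≥0∞ := fun k x => ediff (f (φ k) x) (flim x) with hg_def
  have hgm : ∀ k, Measurable (g k) := fun k =>
    ((hfm (φ k)).sub hflimm).add (hflimm.sub (hfm (φ k)))
  have hgp : ∀ k, ∫⁻ x, g k x ^ p ∂m ≤ ((4:ℝ≥0∞)⁻¹ ^ (k+1)) ^ p := hφ2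
  -- the gauge function
  set G : X → ℝ≥0∞ := fun x => ∑' k, 2 ^ k * g k x with hG_def
  have hum : ∀ k, Measurable fun x => (2:ℝ≥0∞) ^ k * g k x := fun k =>
    (hgm k).const_mul _
  have hGm : Measurable G := Measurable.ennreal_tsum hum
  -- `∫ G^p ∂m ≤ 1`
  have key : ∀ n : ℕ, ∑ i ∈ Finset.range n,
      (∫⁻ x, ((2:ℝ≥0∞) ^ i * g i x) ^ p ∂m) ^ (1 / p) ≤ 1 := by
    intro n
    have h4 : (4:ℝ≥0∞)⁻¹ = 2⁻¹ * 2⁻¹ := by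
      rw [show (4:ℝ≥0∞) = 2 * 2 by norm_num, ENNReal.mul_inv] <;> simp
    have step : ∀ i : ℕ, (∫⁻ x, ((2:ℝ≥0∞) ^ i * g i x) ^ p ∂m) ^ (1 / p)
        ≤ 2⁻¹ * 2⁻¹ ^ (i + 1) := by
      intro i
      have : ∫⁻ x, ((2:ℝ≥0∞) ^ i * g i x) ^ p ∂m
          = ((2:ℝ≥0∞) ^ i) ^ p * ∫⁻ x, g i x ^ p ∂m := by
        rw [← lintegral_const_mul _ ((hgm i).pow_const _)]
        congr 1 with x
        rw [ENNReal.mul_rpow_of_nonneg _ _ hp0.le]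
      rw [this]
      have h1 : ((2:ℝ≥0∞) ^ i) ^ p * ∫⁻ x, g i x ^ p ∂m
          ≤ ((2:ℝ≥0∞) ^ i) ^ p * ((4:ℝ≥0∞)⁻¹ ^ (i+1)) ^ p :=
        mul_le_mul' le_rfl (hgp i)
      calc (((2:ℝ≥0∞) ^ i) ^ p * ∫⁻ x, g i x ^ p ∂m) ^ (1 / p)
          ≤ (((2:ℝ≥0∞) ^ i) ^ p * ((4:ℝ≥0∞)⁻¹ ^ (i+1)) ^ p) ^ (1 / p) :=
            ENNReal.rpow_le_rpow h1 (by positivity)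
        _ = (2:ℝ≥0∞) ^ i * (4:ℝ≥0∞)⁻¹ ^ (i+1) := by
            rw [← ENNReal.mul_rpow_of_nonneg _ _ hp0.le, ← ENNReal.rpow_mul,
              mul_one_div, div_self hp0', ENNReal.rpow_one]
        _ = 2⁻¹ * 2⁻¹ ^ (i + 1) := by
            rw [h4, mul_pow, ← mul_assoc]
            congr 1
            rw [pow_succ, ← mul_assoc, ← mul_pow,
              ENNReal.mul_inv_cancel (by simp) (by simp), one_pow, one_mul]
    calc ∑ i ∈ Finset.range n, (∫⁻ x, ((2:ℝ≥0∞) ^ i * g i x) ^ p ∂m) ^ (1 / p)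
        ≤ ∑ i ∈ Finset.range n, 2⁻¹ * 2⁻¹ ^ (i + 1) :=
          Finset.sum_le_sum fun i _ => step i
      _ ≤ ∑' i : ℕ, 2⁻¹ * 2⁻¹ ^ (i + 1) := ENNReal.sum_le_tsum _
      _ = 2⁻¹ * (2⁻¹ * ∑' i : ℕ, 2⁻¹ ^ i) := by
          rw [ENNReal.tsum_mul_left]
          congr 1
          simp_rw [pow_succ']
          rw [ENNReal.tsum_mul_left]
      _ ≤ 1 := by
          rw [ENNReal.tsum_geometric, ENNReal.one_sub_inv_two, inv_inv,
            ENNReal.inv_mul_cancel (by simp) (by simp), mul_one]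
          exact ENNReal.inv_le_one.mpr one_le_two
  have hGp : ∫⁻ x, G x ^ p ∂m ≤ 1 := by
    set F : ℕ → X → ℝ≥0∞ := fun n x => ∑ i ∈ Finset.range n, (2:ℝ≥0∞) ^ i * g i x with hF_def
    have hFm : ∀ n, Measurable (F n) := fun n => Finset.measurable_sum _ fun i _ => hum i
    have hFmono : Monotone F := fun a b hab x =>
      Finset.sum_le_sum_of_subset (Finset.range_mono hab)
    have hpt : ∀ x, G x ^ p = ⨆ n, F n x ^ p := by
      intro x
      have h1 : Tendsto (fun n => F n x) atTop (𝓝 (G x)) := ENNReal.tendsto_nat_tsum _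
      have h2 : Tendsto (fun n => F n x ^ p) atTop (𝓝 (G x ^ p)) :=
        (ENNReal.continuous_rpow_const.tendsto _).comp h1
      have hmono : Monotone fun n => F n x ^ p := fun a b hab =>
        ENNReal.rpow_le_rpow (hFmono hab x) hp0.le
      exact tendsto_nhds_unique h2 (tendsto_atTop_iSup hmono)
    calc ∫⁻ x, G x ^ p ∂m = ∫⁻ x, ⨆ n, F n x ^ p ∂m := by simp_rw [hpt]
      _ = ⨆ n, ∫⁻ x, F n x ^ p ∂m :=
          lintegral_iSup (fun n => (hFm n).pow_const _)
            (fun a b hab x => ENNReal.rpow_le_rpow (hFmono hab x) hp0.le)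
      _ ≤ 1 := by
          refine iSup_le fun n => ?_
          have h1 : (∫⁻ x, F n x ^ p ∂m) ^ (1/p) ≤ 1 :=
            le_trans (lp_sum_le m hp.le _ hum n) (key n)
          have := ENNReal.rpow_le_rpow h1 hp0.le
          rwa [← ENNReal.rpow_mul, one_div, inv_mul_cancel₀ hp0', ENNReal.rpow_one,
            ENNReal.one_rpow] at this
  refine ⟨{μ | ∫⁻ x, G x ∂μ = ⊤}, ?_, ?_⟩
  · -- Modp = 0
    refine le_antisymm ?_ zero_le'
    refine ENNReal.le_of_forall_pos_le_add fun ε hε _ => ?_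
    rw [zero_add]
    set δ : ℝ≥0∞ := min (ε : ℝ≥0∞) 1 with hδ_def
    have hδ0 : δ ≠ 0 := (lt_min (ENNReal.coe_pos.mpr hε) one_pos).ne'
    have hδ1 : δ ≤ 1 := min_le_right _ _
    have hmem : (fun x => δ * G x) ∈
        {h : X → ℝ≥0∞ | Measurable h ∧ ∀ μ ∈ {μ : Measure X | ∫⁻ x, G x ∂μ = ⊤}, 1 ≤ ∫⁻ x, h x ∂μ} := by
      refine ⟨hGm.const_mul _, fun μ hμ => ?_⟩
      rw [lintegral_const_mul _ hGm, hμ, ENNReal.mul_top hδ0]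
      exact le_top
    calc Modp m p {μ : Measure X | ∫⁻ x, G x ∂μ = ⊤} ≤ ∫⁻ x, (δ * G x) ^ p ∂m :=
          iInf₂_le _ hmem
      _ = δ ^ p * ∫⁻ x, G x ^ p ∂m := by
          rw [← lintegral_const_mul _ (hGm.pow_const _)]
          congr 1 with x
          rw [ENNReal.mul_rpow_of_nonneg _ _ hp0.le]
      _ ≤ δ ^ p * 1 := mul_le_mul' le_rfl hGp
      _ ≤ δ := by
          rw [mul_one]
          calc δ ^ p ≤ δ ^ (1:ℝ) := ENNReal.rpow_le_rpow_of_exponent_ge hδ1 hp.le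
            _ = δ := ENNReal.rpow_one δ
      _ ≤ ε := min_le_left _ _
  · -- convergence off S
    intro μ _ _ hμ
    simp only [mem_setOf_eq] at hμ
    have h1 : ∑' k, ∫⁻ x, (2:ℝ≥0∞) ^ k * g k x ∂μ ≠ ⊤ := by
      rw [← lintegral_tsum fun k => (hum k).aemeasurable]
      exact hμ
    have h2 : ∀ k, ∫⁻ x, (2:ℝ≥0∞) ^ k * g k x ∂μ = 2 ^ k * ∫⁻ x, g k x ∂μ := fun k =>
      lintegral_const_mul _ (hgm k)
    rw [funext h2] at h1
    have h3 : Tendsto (fun k => (2:ℝ≥0∞) ^ k * ∫⁻ x, g k x ∂μ) atTop (𝓝 0) :=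
      ENNReal.tendsto_atTop_zero_of_tsum_ne_top h1
    have h4 : ∀ k, ∫⁻ x, g k x ∂μ ≤ 2 ^ k * ∫⁻ x, g k x ∂μ := fun k =>
      le_mul_of_one_le_left zero_le' (one_le_pow_of_one_le' (by norm_num) k)
    exact tendsto_of_tendsto_of_tendsto_of_le_of_le tendsto_const_nhds h3
      (fun k => zero_le') h4
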